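/- Let Γ be a connected graph on n vertices without isolated vertices. Then the double domination number of the rooted product of Γ with the 4-cycle C_4 (rooted at any vertex) equals n·γ_×2(C_4) = 3n. -/

import Mathlib

open SimpleGraph

variable {V : Type*}

/-- `D` is a dominating set of `G`: every vertex is in `D` or adjacent to a vertex of `D`. -/
def IsDominating (G : SimpleGraph V) (D : Set V) : Prop :=
  ∀ u : V, u ∈ D ∨ ∃ d ∈ D, G.Adj u d

/-- `D` is a total dominating set of `G`: every vertex has a neighbor in `D`. -/
def IsTotalDominating (G : SimpleGraph V) (D : Set V) : Prop :=
  ∀ u : V, ∃ d ∈ D, G.Adj u d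

/-- `R` is a resolving set of `G`. -/
def IsResolving (G : SimpleGraph V) (R : Set V) : Prop :=
  ∀ u v : V, u ≠ v → ∃ r ∈ R, G.dist u r ≠ G.dist v r

/-- `D` is an independent set of `G`. -/
def IsIndependentSet (G : SimpleGraph V) (D : Set V) : Prop :=
  ∀ u ∈ D, ∀ v ∈ D, ¬ G.Adj u v

/-- the subgraph of `G` induced by `D` is connected. -/
def InducedConnected (G : SimpleGraph V) (D : Set V) : Prop :=
  (G.induce D).Connected

/-- closed neighborhood -/
def closedNbhd (G : SimpleGraph V) (u : V) : Set V :=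
  insert u (G.neighborSet u)

/-- `D` is a double dominating set of `G`: `|N[u] ∩ D| ≥ 2` for every vertex `u`. -/
def IsDoubleDominating (G : SimpleGraph V) (D : Set V) : Prop :=
  ∀ u : V, 2 ≤ (closedNbhd G u ∩ D).ncard

/-- `D` is a 2-dominating set of `G`: every vertex outside `D` has ≥ 2 neighbors in `D`. -/
def IsTwoDominating (G : SimpleGraph V) (D : Set V) : Prop :=
  ∀ u : V, u ∉ D → 2 ≤ (G.neighborSet u ∩ D).ncard

/-- minimum cardinality of a set of vertices satisfying `P`. -/
noncomputable def minCard (P : Set V → Prop) : ℕ :=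
  sInf {n : ℕ | ∃ D : Set V, P D ∧ D.ncard = n}

noncomputable def gamma (G : SimpleGraph V) : ℕ := minCard (IsDominating G)
noncomputable def gammaT (G : SimpleGraph V) : ℕ := minCard (IsTotalDominating G)
noncomputable def gammaC (G : SimpleGraph V) : ℕ :=
  minCard (fun D => IsDominating G D ∧ InducedConnected G D)
noncomputable def gammaI (G : SimpleGraph V) : ℕ :=
  minCard (fun D => IsDominating G D ∧ IsIndependentSet G D)
noncomputable def gammaX2 (G : SimpleGraph V) : ℕ := minCard (IsDoubleDominating G)
noncomputable def gamma2 (G : SimpleGraph V) : ℕ := minCard (IsTwoDominating G)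
noncomputable def mdim (G : SimpleGraph V) : ℕ := minCard (IsResolving G)
noncomputable def gammaR (G : SimpleGraph V) : ℕ :=
  minCard (fun D => IsDominating G D ∧ IsResolving G D)
noncomputable def gammaRI (G : SimpleGraph V) : ℕ :=
  minCard (fun D => IsDominating G D ∧ IsIndependentSet G D ∧ IsResolving G D)
noncomputable def gammaRT (G : SimpleGraph V) : ℕ :=
  minCard (fun D => IsTotalDominating G D ∧ IsResolving G D)
noncomputable def gammaRC (G : SimpleGraph V) : ℕ :=
  minCard (fun D => IsDominating G D ∧ InducedConnected G D ∧ IsResolving G D)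

/-- `u` and `v` are twins: `N(u) = N(v)` or `N[u] = N[v]`. -/
def AreTwins (G : SimpleGraph V) (u v : V) : Prop :=
  G.neighborSet u = G.neighborSet v ∨ closedNbhd G u = closedNbhd G v

/-- The rooted product `Γ ∘_v Ω`: a copy of `Ω` is attached at its root `v`
to every vertex of `Γ`. -/
def rootedProduct {α β : Type*} (Γ : SimpleGraph α) (Ω : SimpleGraph β) (v : β) :
    SimpleGraph (α × β) where
  Adj p q := (p.2 = v ∧ q.2 = v ∧ Γ.Adj p.1 q.1) ∨ (p.1 = q.1 ∧ Ω.Adj p.2 q.2)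
  symm := by
    refine ⟨fun p q h => ?_⟩
    rcases h with ⟨h1, h2, h3⟩ | ⟨h1, h2⟩
    · exact Or.inl ⟨h2, h1, h3.symm⟩
    · exact Or.inr ⟨h1.symm, h2.symm⟩
  loopless := by
    refine ⟨fun p h => ?_⟩
    rcases h with ⟨_, _, h⟩ | ⟨_, h⟩ <;> exact h.ne rfl

/-- Vertex type of the fractal cubic network `FCN l`. -/
def FCNVert : ℕ → Type
  | 0 => Fin 4
  | (l + 1) => Fin 4 × FCNVert l

/-- Auxiliary vertex `(01)^{l+1}` of `FCN l` (labels `00,01,11,10` ↦ `0,1,2,3`). -/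
def fcnAux : (l : ℕ) → FCNVert l
  | 0 => ((1 : Fin 4) : FCNVert 0)
  | (l + 1) => (((1 : Fin 4), fcnAux l) : FCNVert (l + 1))

/-- The designated root `10(01)^l` of `FCN l`. -/
def fcnRoot : (l : ℕ) → FCNVert l
  | 0 => ((3 : Fin 4) : FCNVert 0)
  | (l + 1) => (((3 : Fin 4), fcnAux l) : FCNVert (l + 1))

/-- The fractal cubic network: `FCN 0 = C₄` and
`FCN (l+1) = C₄ ∘_v FCN l`, rooted at the designated root of `FCN l`. -/
def FCN : (l : ℕ) → SimpleGraph (FCNVert l)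
  | 0 => cycleGraph 4
  | (l + 1) => rootedProduct (cycleGraph 4) (FCN l) (fcnRoot l)


section MyAux

open SimpleGraph

lemma my_mem_closedNbhd_iff {V : Type*} {G : SimpleGraph V} {u x : V} :
    x ∈ closedNbhd G u ↔ x = u ∨ G.Adj u x := by
  simp [closedNbhd, SimpleGraph.mem_neighborSet]

lemma my_fact1 : ∀ v w : Fin 4, ∃ x y : Fin 4, x ≠ y ∧
    (x = v ∨ (cycleGraph 4).Adj v x) ∧ (y = v ∨ (cycleGraph 4).Adj v y) ∧
    (x = w ∨ (cycleGraph 4).Adj w x) ∧ (y = w ∨ (cycleGraph 4).Adj w y) := by decide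

lemma my_fact2 : ∀ (v a b : Fin 4),
    (∀ x, x ≠ v → (a = x ∨ (cycleGraph 4).Adj x a)) →
    (∀ x, x ≠ v → (b = x ∨ (cycleGraph 4).Adj x b)) → a = b := by decide

lemma my_fact3 : ∀ v : Fin 4, v + 1 ≠ v := by decide

lemma my_closed_eq (v : Fin 4) : closedNbhd (cycleGraph 4) v = {v, v + 1, v + 3} := by
  ext x
  rw [my_mem_closedNbhd_iff]
  revert v x
  decide

lemma my_closed_ncard (v : Fin 4) : (closedNbhd (cycleGraph 4) v).ncard = 3 := by
  rw [my_closed_eq, Set.ncard_eq_three]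
  exact ⟨v, v+1, v+3, by revert v; decide, by revert v; decide, by revert v; decide, rfl⟩

lemma my_copy_lb (v : Fin 4) (S : Set (Fin 4))
    (h : ∀ x : Fin 4, x ≠ v → 2 ≤ (closedNbhd (cycleGraph 4) x ∩ S).ncard) :
    3 ≤ S.ncard := by
  by_contra hlt
  push_neg at hlt
  have hle : S.ncard ≤ 2 := by omega
  have hsub : ∀ x, x ≠ v → S ⊆ closedNbhd (cycleGraph 4) x := by
    intro x hx
    have h2 := h x hx
    have heq : closedNbhd (cycleGraph 4) x ∩ S = S :=
      Set.eq_of_subset_of_ncard_le Set.inter_subset_right (le_trans hle h2)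
    exact heq ▸ Set.inter_subset_left
  have h2S : 2 ≤ S.ncard :=
    le_trans (h (v+1) (my_fact3 v)) (Set.ncard_le_ncard Set.inter_subset_right S.toFinite)
  obtain ⟨a, b, ha, hb, hab⟩ := (Set.one_lt_ncard_iff S.toFinite).mp h2S
  exact hab (my_fact2 v a b
    (fun x hx => my_mem_closedNbhd_iff.mp (hsub x hx ha))
    (fun x hx => my_mem_closedNbhd_iff.mp (hsub x hx hb)))

lemma my_minCard_eq {V : Type*} {P : Set V → Prop} {k : ℕ}
    (h1 : ∃ D : Set V, P D ∧ D.ncard = k) (h2 : ∀ D : Set V, P D → k ≤ D.ncard) :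
    minCard P = k := by
  refine le_antisymm (Nat.sInf_le h1) (le_csInf ⟨k, h1⟩ ?_)
  rintro n ⟨D, hP, rfl⟩
  exact h2 D hP

lemma my_gammaX2_C4 : gammaX2 (cycleGraph 4) = 3 := by
  apply my_minCard_eq
  · refine ⟨closedNbhd (cycleGraph 4) 0, ?_, my_closed_ncard 0⟩
    intro u
    obtain ⟨x, y, hxy, hx0, hy0, hxu, hyu⟩ := my_fact1 0 u
    have h1 : 1 < (closedNbhd (cycleGraph 4) u ∩ closedNbhd (cycleGraph 4) 0).ncard :=
      (Set.one_lt_ncard_iff (Set.toFinite _)).mpr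
        ⟨x, y, ⟨my_mem_closedNbhd_iff.mpr hxu, my_mem_closedNbhd_iff.mpr hx0⟩,
          ⟨my_mem_closedNbhd_iff.mpr hyu, my_mem_closedNbhd_iff.mpr hy0⟩, hxy⟩
    omega
  · intro D hD
    exact my_copy_lb 0 D (fun x _ => hD x)

end MyAux

theorem stmt10 {α : Type*} [Fintype α] (Γ : SimpleGraph α)
    (hconn : Γ.Connected) (hiso : ∀ a : α, ∃ b : α, Γ.Adj a b) (v : Fin 4) :
    gammaX2 (rootedProduct Γ (SimpleGraph.cycleGraph 4) v)
      = Fintype.card α * gammaX2 (SimpleGraph.cycleGraph 4) ∧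
    gammaX2 (rootedProduct Γ (SimpleGraph.cycleGraph 4) v) = 3 * Fintype.card α := by
  classical
  set G := rootedProduct Γ (SimpleGraph.cycleGraph 4) v with hG
  have hmain : gammaX2 G = 3 * Fintype.card α := by
    apply my_minCard_eq
    · -- upper bound
      refine ⟨(Set.univ : Set α) ×ˢ closedNbhd (cycleGraph 4) v, ?_, ?_⟩
      · intro p
        obtain ⟨x, y, hxy, hxv, hyv, hxw, hyw⟩ := my_fact1 v p.2
        have mem : ∀ z : Fin 4, (z = p.2 ∨ (cycleGraph 4).Adj p.2 z) →
            (p.1, z) ∈ closedNbhd G p := by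
          intro z hz
          rw [my_mem_closedNbhd_iff]
          rcases hz with rfl | h
          · exact Or.inl rfl
          · exact Or.inr (Or.inr ⟨rfl, h⟩)
        have memD : ∀ z : Fin 4, (z = v ∨ (cycleGraph 4).Adj v z) →
            (p.1, z) ∈ (Set.univ : Set α) ×ˢ closedNbhd (cycleGraph 4) v := by
          intro z hz
          exact ⟨Set.mem_univ _, my_mem_closedNbhd_iff.mpr hz⟩
        have h1 : 1 < (closedNbhd G p ∩
            (Set.univ : Set α) ×ˢ closedNbhd (cycleGraph 4) v).ncard :=
          (Set.one_lt_ncard_iff (Set.toFinite _)).mpr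
            ⟨(p.1, x), (p.1, y), ⟨mem x hxw, memD x hxv⟩, ⟨mem y hyw, memD y hyv⟩,
              fun hc => hxy (congrArg Prod.snd hc)⟩
        omega
      · rw [← Nat.card_coe_set_eq, Nat.card_congr (Equiv.Set.prod _ _), Nat.card_prod,
          Nat.card_coe_set_eq, Nat.card_coe_set_eq, Set.ncard_univ,
          Nat.card_eq_fintype_card, my_closed_ncard, mul_comm]
    · -- lower bound
      intro D hD
      have hinj : ∀ a : α, Function.Injective (fun w : Fin 4 => (a, w)) :=
        fun a w1 w2 h => (Prod.ext_iff.mp h).2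
      have key : ∀ a : α, 3 ≤ {w : Fin 4 | (a, w) ∈ D}.ncard := by
        intro a
        apply my_copy_lb v
        intro x hxv
        have h2 := hD (a, x)
        have himg : closedNbhd G (a, x) ∩ D =
            (fun w : Fin 4 => (a, w)) '' (closedNbhd (cycleGraph 4) x ∩ {w | (a, w) ∈ D}) := by
          ext p
          simp only [Set.mem_inter_iff, Set.mem_image, Set.mem_setOf_eq, my_mem_closedNbhd_iff]
          constructor
          · rintro ⟨hc, hd⟩
            rcases hc with rfl | hadj
            · exact ⟨x, ⟨Or.inl rfl, hd⟩, rfl⟩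
            · rcases hadj with ⟨hxv', _⟩ | ⟨ha, hA⟩
              · exact absurd hxv' hxv
              · refine ⟨p.2, ⟨Or.inr hA, ?_⟩, ?_⟩
                · rwa [show a = p.1 from ha, Prod.mk.eta]
                · rw [show a = p.1 from ha, Prod.mk.eta]
          · rintro ⟨w, ⟨hw, hwD⟩, rfl⟩
            refine ⟨?_, hwD⟩
            rcases hw with rfl | h
            · exact Or.inl rfl
            · exact Or.inr (Or.inr ⟨rfl, h⟩)
        rw [himg, Set.ncard_image_of_injective _ (hinj a)] at h2
        exact h2
      have hfin : D.Finite := Set.toFinite D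
      rw [Set.ncard_eq_toFinset_card D hfin]
      rw [Finset.card_eq_sum_card_fiberwise
        (f := Prod.fst) (s := hfin.toFinset) (t := Finset.univ) (fun x _ => Finset.mem_univ _)]
      have hfib : ∀ a : α, 3 ≤ (hfin.toFinset.filter fun p => p.1 = a).card := by
        intro a
        have hset : ((hfin.toFinset.filter fun p => p.1 = a) : Set (α × Fin 4)) =
            (fun w : Fin 4 => (a, w)) '' {w | (a, w) ∈ D} := by
          ext p
          simp only [Finset.coe_filter, Set.Finite.mem_toFinset, Set.mem_setOf_eq,
            Set.mem_image]
          constructor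
          · rintro ⟨hd, rfl⟩
            exact ⟨p.2, by rwa [Prod.mk.eta], Prod.mk.eta⟩
          · rintro ⟨w, hw, rfl⟩
            exact ⟨hw, rfl⟩
        have : (hfin.toFinset.filter fun p => p.1 = a).card =
            {w : Fin 4 | (a, w) ∈ D}.ncard := by
          rw [← Set.ncard_coe_finset, hset, Set.ncard_image_of_injective _ (hinj a)]
        rw [this]
        exact key a
      calc 3 * Fintype.card α = ∑ _a : α, 3 := by
              rw [Finset.sum_const, smul_eq_mul, mul_comm, Finset.card_univ]
        _ ≤ ∑ a : α, (hfin.toFinset.filter fun p => p.1 = a).card :=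
              Finset.sum_le_sum (fun a _ => hfib a)
  exact ⟨by rw [hmain, my_gammaX2_C4, mul_comm], hmain⟩
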